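/- A pair (v*, y*) is a global minimizer of G(v,y) := Ψ̂(v) + (1/(2γ))‖Ĩv − y‖₂² + ι_m(y) (where Ψ̂(v) := f(v) + ι_q(Qv)) if and only if v* is a global minimizer of Ψ(v) := Ψ̂(v) + ι̃_{m,γ}(Ĩv) and y* = S_m(Ĩv*). (Theorem 2: equivalence of the dual-variable surrogate and the single-variable relaxed model.) -/

import Mathlib

open scoped Classical

noncomputable def norm0 {N : ℕ} (y : Fin N → ℝ) : ℕ :=
  (Finset.univ.filter (fun j => y j ≠ 0)).card

def IsLAV {N : ℕ} (m : ℕ) (w : Fin N → ℝ) (J : Finset (Fin N)) : Prop :=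
  J.card = m ∧ ∀ i ∈ J, ∀ j ∉ J, |w j| ≤ |w i|

def hardThresh {N : ℕ} (w : Fin N → ℝ) (J : Finset (Fin N)) : Fin N → ℝ :=
  fun j => if j ∈ J then w j else 0

/-- indicator of the constraint `u ≥ q` (componentwise) -/
noncomputable def iotaQ {n : ℕ} (q u : Fin n → ℝ) : EReal :=
  if ∀ i, q i ≤ u i then 0 else ⊤

/-- indicator of the m-sparse set -/
noncomputable def iotaM {N : ℕ} (m : ℕ) (y : Fin N → ℝ) : EReal :=
  if norm0 y ≤ m then 0 else ⊤

/-- tailed approximation of the `ℓ₀` constraint, via its variational form: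
`ι̃_{m,γ}(w) = (1/(2γ)) · inf { ‖w − y‖₂² : ‖y‖₀ ≤ m }` -/
noncomputable def iotaTilde {N : ℕ} (m : ℕ) (γ : ℝ) (w : Fin N → ℝ) : ℝ :=
  (1 / (2 * γ)) * sInf {c : ℝ | ∃ y : Fin N → ℝ, norm0 y ≤ m ∧ c = ∑ j, (w j - y j) ^ 2}

/-- relaxed objective `Ψ(v) = f(v) + ι_q(Qv) + ι̃_{m,γ}(Ĩv)` -/
noncomputable def Psi {N N₁ N₂ : ℕ} (m : ℕ) (γ : ℝ) (f : (Fin N₁ → ℝ) → ℝ)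
    (Q : Matrix (Fin N₂) (Fin N₁) ℝ) (q : Fin N₂ → ℝ)
    (Itil : Matrix (Fin N) (Fin N₁) ℝ) (v : Fin N₁ → ℝ) : EReal :=
  (f v : EReal) + iotaQ q (Q.mulVec v) + (iotaTilde m γ (Itil.mulVec v) : ℝ)

/-- surrogate objective
`G(v,y) = f(v) + ι_q(Qv) + (1/(2γ))‖Ĩv − y‖₂² + ι_m(y)` -/
noncomputable def Gfun {N N₁ N₂ : ℕ} (m : ℕ) (γ : ℝ) (f : (Fin N₁ → ℝ) → ℝ)
    (Q : Matrix (Fin N₂) (Fin N₁) ℝ) (q : Fin N₂ → ℝ)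
    (Itil : Matrix (Fin N) (Fin N₁) ℝ) (v : Fin N₁ → ℝ) (y : Fin N → ℝ) : EReal :=
  (f v : EReal) + iotaQ q (Q.mulVec v)
    + (((1 / (2 * γ)) * ∑ j, (Itil.mulVec v j - y j) ^ 2 : ℝ) : EReal)
    + iotaM m y

section Aux
variable {N m : ℕ}

lemma norm0_hardThresh_le (w : Fin N → ℝ) (A : Finset (Fin N)) :
    norm0 (hardThresh w A) ≤ A.card := by
  apply Finset.card_le_card
  intro j hj
  simp only [Finset.mem_filter, hardThresh] at hj
  by_contra h
  simp [h] at hj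

lemma sum_sq_hardThresh (w : Fin N → ℝ) (A : Finset (Fin N)) :
    ∑ j, (w j - hardThresh w A j) ^ 2 = ∑ j ∈ Aᶜ, (w j) ^ 2 := by
  rw [← Finset.sum_add_sum_compl A fun j => (w j - hardThresh w A j) ^ 2]
  have h1 : ∑ j ∈ A, (w j - hardThresh w A j) ^ 2 = 0 :=
    Finset.sum_eq_zero fun j hj => by simp [hardThresh, hj]
  have h2 : ∀ j ∈ Aᶜ, (w j - hardThresh w A j) ^ 2 = (w j) ^ 2 := fun j hj => by
    simp [hardThresh, Finset.mem_compl.mp hj]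
  rw [h1, zero_add]
  exact Finset.sum_congr rfl h2

lemma exists_LAV (hm : m ≤ N) (w : Fin N → ℝ) : ∃ J, IsLAV m w J := by
  have hm' : m ≤ (Finset.univ : Finset (Fin N)).card := by simpa using hm
  obtain ⟨J0, -, hJ0⟩ := Finset.exists_subset_card_eq hm'
  set s := (Finset.univ : Finset (Fin N)).powersetCard m with hs
  have hne : s.Nonempty := ⟨J0, by simp [hs, Finset.mem_powersetCard, hJ0]⟩
  obtain ⟨J, hJs, hmax⟩ := s.exists_max_image (fun J => ∑ j ∈ J, |w j|) hne
  have hcard : J.card = m := (Finset.mem_powersetCard.mp hJs).2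
  refine ⟨J, hcard, ?_⟩
  intro i hi j hj
  by_contra h
  push_neg at h
  set J' := insert j (J.erase i) with hJ'
  have hjE : j ∉ J.erase i := fun hc => hj (Finset.mem_of_mem_erase hc)
  have hcard' : J'.card = m := by
    rw [hJ', Finset.card_insert_of_notMem hjE, Finset.card_erase_of_mem hi, hcard]
    have : 1 ≤ m := by
      rw [← hcard]; exact Finset.card_pos.mpr ⟨i, hi⟩
    omega
  have hJ's : J' ∈ s := by simp [hs, Finset.mem_powersetCard, hcard']
  have hsum : ∑ k ∈ J', |w k| = |w j| + (∑ k ∈ J, |w k|) - |w i| := by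
    rw [hJ', Finset.sum_insert hjE]
    have := Finset.sum_erase_add J (fun k => |w k|) hi
    linarith [this]
  have := hmax J' hJ's
  rw [hsum] at this
  linarith

lemma sum_le_sum_card_eq {A B : Finset (Fin N)} (h : A.card = B.card) (f : Fin N → ℝ)
    (hf : ∀ a ∈ A, ∀ b ∈ B, f a ≤ f b) : ∑ a ∈ A, f a ≤ ∑ b ∈ B, f b := by
  let e := Finset.equivOfCardEq h
  calc ∑ a ∈ A, f a = ∑ a : A, f a := (Finset.sum_coe_sort A f).symm
    _ ≤ ∑ a : A, f (e a) := Finset.sum_le_sum fun a _ => hf a a.2 (e a) (e a).2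
    _ = ∑ b : B, f b := e.sum_comp fun b => f (b : Fin N)
    _ = ∑ b ∈ B, f b := Finset.sum_coe_sort B f

lemma sq_le_sq_of_abs_le {a b : ℝ} (h : |a| ≤ |b|) : a ^ 2 ≤ b ^ 2 := by
  rw [← sq_abs a, ← sq_abs b]
  exact pow_le_pow_left₀ (abs_nonneg a) h 2

lemma key_ineq {w : Fin N → ℝ} {J : Finset (Fin N)} (hJ : IsLAV m w J)
    (y : Fin N → ℝ) (hy : norm0 y ≤ m) :
    ∑ j ∈ Jᶜ, (w j) ^ 2 ≤ ∑ j, (w j - y j) ^ 2 := by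
  classical
  set Z := (Finset.univ.filter (fun j => y j ≠ 0))ᶜ with hZ
  have hyZ : ∀ j ∈ Z, y j = 0 := by
    intro j hj
    have := Finset.mem_compl.mp hj
    simpa using this
  have hZcard : Jᶜ.card ≤ Z.card := by
    rw [Finset.card_compl, Finset.card_compl, hJ.1]
    have : (Finset.univ.filter (fun j => y j ≠ 0)).card ≤ m := hy
    simp only [Fintype.card_fin]
    omega
  -- step B : sum over Jᶜ ≤ sum over Z
  have hstepB : ∑ j ∈ Jᶜ, (w j) ^ 2 ≤ ∑ j ∈ Z, (w j) ^ 2 := by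
    have hcard2 : (Jᶜ \ Z).card ≤ (Z \ Jᶜ).card := by
      have e1 := Finset.card_inter_add_card_sdiff Jᶜ Z
      have e2 := Finset.card_inter_add_card_sdiff Z Jᶜ
      rw [Finset.inter_comm] at e2
      omega
    obtain ⟨B, hBsub, hBcard⟩ := Finset.exists_subset_card_eq hcard2
    have h2 : ∑ j ∈ Jᶜ \ Z, (w j) ^ 2 ≤ ∑ j ∈ B, (w j) ^ 2 := by
      apply sum_le_sum_card_eq hBcard.symm
      intro a ha b hb
      have haJ : a ∉ J := Finset.mem_compl.mp (Finset.mem_sdiff.mp ha).1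
      have hbJ : b ∈ J := by
        have := (Finset.mem_sdiff.mp (hBsub hb)).2
        simpa using this
      exact sq_le_sq_of_abs_le (hJ.2 b hbJ a haJ)
    have hdisj : Disjoint (Jᶜ ∩ Z) B := by
      apply Finset.disjoint_left.mpr
      intro x hx hxB
      exact (Finset.mem_sdiff.mp (hBsub hxB)).2 (Finset.mem_inter.mp hx).1
    have hsubZ : (Jᶜ ∩ Z) ∪ B ⊆ Z := by
      intro x hx
      rcases Finset.mem_union.mp hx with h | h
      · exact (Finset.mem_inter.mp h).2
      · exact (Finset.mem_sdiff.mp (hBsub h)).1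
    calc ∑ j ∈ Jᶜ, (w j) ^ 2
        = ∑ j ∈ Jᶜ ∩ Z, (w j) ^ 2 + ∑ j ∈ Jᶜ \ Z, (w j) ^ 2 :=
          (Finset.sum_inter_add_sum_sdiff Jᶜ Z _).symm
      _ ≤ ∑ j ∈ Jᶜ ∩ Z, (w j) ^ 2 + ∑ j ∈ B, (w j) ^ 2 := by linarith
      _ = ∑ j ∈ (Jᶜ ∩ Z) ∪ B, (w j) ^ 2 := (Finset.sum_union hdisj).symm
      _ ≤ ∑ j ∈ Z, (w j) ^ 2 :=
          Finset.sum_le_sum_of_subset_of_nonneg hsubZ fun j _ _ => sq_nonneg _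
  -- step A : sum over Z ≤ total
  have hstepA : ∑ j ∈ Z, (w j) ^ 2 ≤ ∑ j, (w j - y j) ^ 2 := by
    have : ∑ j ∈ Z, (w j) ^ 2 = ∑ j ∈ Z, (w j - y j) ^ 2 :=
      Finset.sum_congr rfl fun j hj => by rw [hyZ j hj, sub_zero]
    rw [this]
    exact Finset.sum_le_sum_of_subset_of_nonneg (Finset.subset_univ Z)
      fun j _ _ => sq_nonneg _
  linarith

lemma sInf_setS {w : Fin N → ℝ} {J : Finset (Fin N)} (hJ : IsLAV m w J) :
    sInf {c : ℝ | ∃ y : Fin N → ℝ, norm0 y ≤ m ∧ c = ∑ j, (w j - y j) ^ 2}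
      = ∑ j ∈ Jᶜ, (w j) ^ 2 := by
  have hbdd : BddBelow {c : ℝ | ∃ y : Fin N → ℝ, norm0 y ≤ m ∧ c = ∑ j, (w j - y j) ^ 2} :=
    ⟨0, fun c ⟨y, _, hc⟩ => hc ▸ Finset.sum_nonneg fun j _ => sq_nonneg _⟩
  have hmem : (∑ j ∈ Jᶜ, (w j) ^ 2)
      ∈ {c : ℝ | ∃ y : Fin N → ℝ, norm0 y ≤ m ∧ c = ∑ j, (w j - y j) ^ 2} :=
    ⟨hardThresh w J, (norm0_hardThresh_le w J).trans hJ.1.le, (sum_sq_hardThresh w J).symm⟩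
  refine le_antisymm (csInf_le hbdd hmem) (le_csInf ⟨_, hmem⟩ ?_)
  rintro c ⟨y, hy, rfl⟩
  exact key_ineq hJ y hy

end Aux


section Main
variable {N N₁ N₂ m : ℕ} {γ : ℝ} {f : (Fin N₁ → ℝ) → ℝ}
  {Q : Matrix (Fin N₂) (Fin N₁) ℝ} {q : Fin N₂ → ℝ}
  {Itil : Matrix (Fin N) (Fin N₁) ℝ}

lemma Gfun_top_of_notM {v : Fin N₁ → ℝ} {y : Fin N → ℝ} (h : ¬ norm0 y ≤ m) :
    Gfun m γ f Q q Itil v y = ⊤ := by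
  unfold Gfun iotaM iotaQ
  rw [if_neg h]
  apply EReal.add_top_of_ne_bot
  have h1 : (if ∀ i, q i ≤ Q.mulVec v i then (0:EReal) else ⊤) ≠ ⊥ := by split <;> simp
  simp [EReal.add_eq_bot_iff, h1, ← EReal.coe_mul]

lemma Gfun_top_of_notQ {v : Fin N₁ → ℝ} {y : Fin N → ℝ} (h : ¬ ∀ i, q i ≤ Q.mulVec v i) :
    Gfun m γ f Q q Itil v y = ⊤ := by
  unfold Gfun iotaQ iotaM
  rw [if_neg h, EReal.add_top_of_ne_bot (EReal.coe_ne_bot _),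
    EReal.top_add_of_ne_bot (EReal.coe_ne_bot _)]
  apply EReal.top_add_of_ne_bot
  split <;> simp

lemma Gfun_eq_coe {v : Fin N₁ → ℝ} {y : Fin N → ℝ} (hQ : ∀ i, q i ≤ Q.mulVec v i)
    (hy : norm0 y ≤ m) :
    Gfun m γ f Q q Itil v y
      = ((f v + (1 / (2 * γ)) * ∑ j, (Itil.mulVec v j - y j) ^ 2 : ℝ) : EReal) := by
  unfold Gfun iotaQ iotaM
  rw [if_pos hQ, if_pos hy, add_zero, add_zero, ← EReal.coe_add]

lemma Psi_eq_coe {v : Fin N₁ → ℝ} (hQ : ∀ i, q i ≤ Q.mulVec v i) :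
    Psi m γ f Q q Itil v = ((f v + iotaTilde m γ (Itil.mulVec v) : ℝ) : EReal) := by
  unfold Psi iotaQ
  rw [if_pos hQ, add_zero, ← EReal.coe_add]

lemma iotaTilde_eq {w : Fin N → ℝ} {J : Finset (Fin N)} (hJ : IsLAV m w J) :
    iotaTilde m γ w = (1 / (2 * γ)) * ∑ j ∈ Jᶜ, (w j) ^ 2 := by
  unfold iotaTilde
  rw [sInf_setS hJ]

/-- `Ψ(v) = G(v, S_m(Ĩ v))` -/
lemma Gfun_hardThresh_eq_Psi {v : Fin N₁ → ℝ} {J : Finset (Fin N)}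
    (hJ : IsLAV m (Itil.mulVec v) J) :
    Gfun m γ f Q q Itil v (hardThresh (Itil.mulVec v) J) = Psi m γ f Q q Itil v := by
  unfold Gfun Psi iotaM
  rw [if_pos ((norm0_hardThresh_le _ J).trans hJ.1.le), add_zero,
    sum_sq_hardThresh, iotaTilde_eq hJ]

/-- `Ψ(v) ≤ G(v, y)` for every `y` -/
lemma Psi_le_Gfun (hγ : 0 < γ) (v : Fin N₁ → ℝ) (y : Fin N → ℝ) :
    Psi m γ f Q q Itil v ≤ Gfun m γ f Q q Itil v y := by
  by_cases hy : norm0 y ≤ m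
  · unfold Gfun Psi iotaM
    rw [if_pos hy, add_zero]
    apply add_le_add_right
    rw [EReal.coe_le_coe_iff]
    unfold iotaTilde
    have hbdd : BddBelow {c : ℝ | ∃ y : Fin N → ℝ, norm0 y ≤ m ∧ c = ∑ j, (Itil.mulVec v j - y j) ^ 2} :=
      ⟨0, fun c ⟨y', _, hc⟩ => hc ▸ Finset.sum_nonneg fun j _ => sq_nonneg _⟩
    have hle := csInf_le hbdd (⟨y, hy, rfl⟩ :
      (∑ j, (Itil.mulVec v j - y j) ^ 2) ∈ {c : ℝ | ∃ y' : Fin N → ℝ, norm0 y' ≤ m ∧ c = ∑ j, (Itil.mulVec v j - y' j) ^ 2})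
    have hpos : (0:ℝ) ≤ 1 / (2 * γ) := by positivity
    exact mul_le_mul_of_nonneg_left hle hpos
  · rw [Gfun_top_of_notM hy]
    exact le_top

end Main

/-- Theorem 2: assuming the constraint `Qv ≥ q` is feasible,
`(v*, y*)` is a global minimizer of `G` iff `v*` is a global minimizer of `Ψ`
and `y* = S_m(Ĩv*)` for some m-LAV index set of `Ĩv*`. -/
theorem G_minimizer_iff_Psi_minimizer {N N₁ N₂ m : ℕ} (hm : m ≤ N)
    (γ : ℝ) (hγ : 0 < γ)
    (f : (Fin N₁ → ℝ) → ℝ) (Q : Matrix (Fin N₂) (Fin N₁) ℝ) (q : Fin N₂ → ℝ)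
    (Itil : Matrix (Fin N) (Fin N₁) ℝ)
    (hfeas : ∃ v : Fin N₁ → ℝ, ∀ i, q i ≤ Q.mulVec v i)
    (vs : Fin N₁ → ℝ) (ys : Fin N → ℝ) :
    (∀ (v : Fin N₁ → ℝ) (y : Fin N → ℝ),
        Gfun m γ f Q q Itil vs ys ≤ Gfun m γ f Q q Itil v y) ↔
      ((∀ v : Fin N₁ → ℝ, Psi m γ f Q q Itil vs ≤ Psi m γ f Q q Itil v) ∧
        ∃ J : Finset (Fin N), IsLAV m (Itil.mulVec vs) J ∧
          ys = hardThresh (Itil.mulVec vs) J) := by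
  constructor
  · -- forward direction
    intro hmin
    obtain ⟨J, hJ⟩ := exists_LAV hm (Itil.mulVec vs)
    obtain ⟨v0, hv0⟩ := hfeas
    obtain ⟨J0, hJ0⟩ := exists_LAV hm (Itil.mulVec v0)
    have hfin : Gfun m γ f Q q Itil vs ys ≠ ⊤ := by
      have h1 := hmin v0 (hardThresh (Itil.mulVec v0) J0)
      rw [Gfun_eq_coe hv0 ((norm0_hardThresh_le _ _).trans hJ0.1.le)] at h1
      intro hc
      rw [hc] at h1
      exact absurd h1 (not_le.mpr (EReal.coe_lt_top _))
    have hQs : ∀ i, q i ≤ Q.mulVec vs i := by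
      by_contra h; exact hfin (Gfun_top_of_notQ h)
    have hys : norm0 ys ≤ m := by
      by_contra h; exact hfin (Gfun_top_of_notM h)
    have hpos : (0:ℝ) < 1 / (2 * γ) := by positivity
    have hymin : ∀ y : Fin N → ℝ, norm0 y ≤ m →
        ∑ j, (Itil.mulVec vs j - ys j) ^ 2 ≤ ∑ j, (Itil.mulVec vs j - y j) ^ 2 := by
      intro y hy
      have h1 := hmin vs y
      rw [Gfun_eq_coe hQs hys, Gfun_eq_coe hQs hy, EReal.coe_le_coe_iff] at h1
      exact (mul_le_mul_iff_right₀ hpos).mp (by linarith)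
    have heq : ∑ j, (Itil.mulVec vs j - ys j) ^ 2 = ∑ j ∈ Jᶜ, (Itil.mulVec vs j) ^ 2 := by
      refine le_antisymm ?_ (key_ineq hJ ys hys)
      have h2 := hymin (hardThresh (Itil.mulVec vs) J)
        ((norm0_hardThresh_le _ _).trans hJ.1.le)
      rwa [sum_sq_hardThresh] at h2
    set S := Finset.univ.filter (fun j => ys j ≠ 0) with hS
    have hScard : S.card ≤ m := hys
    have hScomp : ∀ j, j ∉ S → ys j = 0 := by
      intro j hj
      by_contra h
      exact hj (by simp [hS, h])
    have hsplit : ∑ j, (Itil.mulVec vs j - ys j) ^ 2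
        = ∑ j ∈ S, (Itil.mulVec vs j - ys j) ^ 2 + ∑ j ∈ Sᶜ, (Itil.mulVec vs j) ^ 2 := by
      rw [← Finset.sum_add_sum_compl S fun j => (Itil.mulVec vs j - ys j) ^ 2]
      congr 1
      exact Finset.sum_congr rfl fun j hj => by
        rw [hScomp j (Finset.mem_compl.mp hj), sub_zero]
    have hminA : ∀ A : Finset (Fin N), A.card ≤ m →
        ∑ j, (Itil.mulVec vs j - ys j) ^ 2 ≤ ∑ j ∈ Aᶜ, (Itil.mulVec vs j) ^ 2 := by
      intro A hA
      have h2 := hymin (hardThresh (Itil.mulVec vs) A) ((norm0_hardThresh_le _ _).trans hA)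
      rwa [sum_sq_hardThresh] at h2
    have hSle := hminA S hScard
    have hzero : ∀ j ∈ S, Itil.mulVec vs j = ys j := by
      have hsum0 : ∑ j ∈ S, (Itil.mulVec vs j - ys j) ^ 2 ≤ 0 := by linarith
      intro j hj
      have h0 := (Finset.sum_eq_zero_iff_of_nonneg (fun j _ => sq_nonneg _)).mp
        (le_antisymm hsum0 (Finset.sum_nonneg fun j _ => sq_nonneg _)) j hj
      exact sub_eq_zero.mp (pow_eq_zero_iff two_ne_zero |>.mp h0)
    have hval : ∑ j, (Itil.mulVec vs j - ys j) ^ 2 = ∑ j ∈ Sᶜ, (Itil.mulVec vs j) ^ 2 := by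
      rw [hsplit, Finset.sum_eq_zero fun j hj => by rw [hzero j hj]; ring, zero_add]
    have hminA' : ∀ A : Finset (Fin N), A.card ≤ m →
        ∑ j ∈ Sᶜ, (Itil.mulVec vs j) ^ 2 ≤ ∑ j ∈ Aᶜ, (Itil.mulVec vs j) ^ 2 :=
      fun A hA => hval ▸ hminA A hA
    have hP : ∀ i ∈ S, ∀ j, j ∉ S → |Itil.mulVec vs j| ≤ |Itil.mulVec vs i| := by
      intro i hi j hj
      by_contra hcon
      push_neg at hcon
      have hij : i ≠ j := fun hc => by subst hc; exact hj hi
      have hjE : j ∉ S.erase i := fun hc => hj (Finset.mem_of_mem_erase hc)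
      have hSpos : 1 ≤ S.card := Finset.card_pos.mpr ⟨i, hi⟩
      have hAcard : (insert j (S.erase i)).card ≤ m := by
        rw [Finset.card_insert_of_notMem hjE, Finset.card_erase_of_mem hi]
        omega
      have hcomp : (insert j (S.erase i))ᶜ = insert i (Sᶜ.erase j) := by
        ext x
        simp only [Finset.mem_compl, Finset.mem_insert, Finset.mem_erase]
        constructor
        · tauto
        · rintro (rfl | ⟨hxj, hxS⟩) <;> push_neg <;> tauto
      have hic : i ∉ Sᶜ.erase j := fun hc =>
        (Finset.mem_compl.mp (Finset.mem_of_mem_erase hc)) hi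
      have hjc : j ∈ Sᶜ := Finset.mem_compl.mpr hj
      have h3 := hminA' _ hAcard
      rw [hcomp, Finset.sum_insert hic] at h3
      have h4 := Finset.sum_erase_add Sᶜ (fun k => (Itil.mulVec vs k) ^ 2) hjc
      have h5 : (Itil.mulVec vs i) ^ 2 < (Itil.mulVec vs j) ^ 2 := by
        rw [← sq_abs (Itil.mulVec vs i), ← sq_abs (Itil.mulVec vs j)]
        exact pow_lt_pow_left₀ hcon (abs_nonneg _) two_ne_zero
      linarith
    have hwz : S.card < m → ∀ j, j ∉ S → Itil.mulVec vs j = 0 := by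
      intro hlt j hj
      by_contra hcon
      have hAcard : (insert j S).card ≤ m := by
        rw [Finset.card_insert_of_notMem hj]; omega
      have hcomp : (insert j S)ᶜ = Sᶜ.erase j := by
        ext x
        simp only [Finset.mem_compl, Finset.mem_insert, Finset.mem_erase]
        tauto
      have hjc : j ∈ Sᶜ := Finset.mem_compl.mpr hj
      have h3 := hminA' _ hAcard
      rw [hcomp] at h3
      have h4 := Finset.sum_erase_add Sᶜ (fun k => (Itil.mulVec vs k) ^ 2) hjc
      have h5 : (Itil.mulVec vs j) ^ 2 ≤ 0 := by linarith
      exact hcon (pow_eq_zero_iff two_ne_zero |>.mp (le_antisymm h5 (sq_nonneg _)))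
    obtain ⟨J', hSJ', hJ'card⟩ := Finset.exists_superset_card_eq hScard (by simpa using hm)
    have hLAV : IsLAV m (Itil.mulVec vs) J' := by
      refine ⟨hJ'card, ?_⟩
      intro i hi j hj
      have hjS : j ∉ S := fun hc => hj (hSJ' hc)
      by_cases hiS : i ∈ S
      · exact hP i hiS j hjS
      · have hlt : S.card < m := by
          rw [← hJ'card]
          exact Finset.card_lt_card ⟨hSJ', fun hsub => hiS (hsub hi)⟩
        rw [hwz hlt j hjS]
        simp
    have hys_eq : ys = hardThresh (Itil.mulVec vs) J' := by
      funext j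
      unfold hardThresh
      by_cases hjJ : j ∈ J'
      · rw [if_pos hjJ]
        by_cases hjS : j ∈ S
        · exact (hzero j hjS).symm
        · have hlt : S.card < m := by
            rw [← hJ'card]
            exact Finset.card_lt_card ⟨hSJ', fun hsub => hjS (hsub hjJ)⟩
          rw [hwz hlt j hjS, hScomp j hjS]
      · rw [if_neg hjJ]
        exact hScomp j fun hc => hjJ (hSJ' hc)
    have hGP : Gfun m γ f Q q Itil vs ys = Psi m γ f Q q Itil vs := by
      rw [Gfun_eq_coe hQs hys, Psi_eq_coe hQs, iotaTilde_eq hJ, heq]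
    refine ⟨fun v => ?_, J', hLAV, hys_eq⟩
    obtain ⟨Jv, hJv⟩ := exists_LAV hm (Itil.mulVec v)
    calc Psi m γ f Q q Itil vs = Gfun m γ f Q q Itil vs ys := hGP.symm
      _ ≤ Gfun m γ f Q q Itil v (hardThresh (Itil.mulVec v) Jv) := hmin v _
      _ = Psi m γ f Q q Itil v := Gfun_hardThresh_eq_Psi hJv
  · -- backward direction
    rintro ⟨hPsiMin, J, hJ, rfl⟩
    intro v y
    calc Gfun m γ f Q q Itil vs (hardThresh (Itil.mulVec vs) J)
        = Psi m γ f Q q Itil vs := Gfun_hardThresh_eq_Psi hJ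
      _ ≤ Psi m γ f Q q Itil v := hPsiMin v
      _ ≤ Gfun m γ f Q q Itil v y := Psi_le_Gfun hγ v y
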